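/- Let N ≥ 2, let ξ : Fin N → ℝ be class-dependent costs with 0 < ξ(k) ≤ 1 for all k, let n : Fin N be the true class, and let o : Fin N → ℝ be real-valued network outputs satisfying o(n) > o(k) for all k ≠ n. Then ξ(n) · exp(o(n)) / (∑_k ξ(k) · exp(o(k))) > ξ(n) / (∑_k ξ(k)). -/
import Mathlib

/-- If the true class `n` has the strictly largest output, then its cost-sensitive
softmax score at `o` strictly exceeds its score at the all-zero guess point. -/
theorem cost_sensitive_softmax_gt_guess
    (N : ℕ) (hN : 2 ≤ N) (ξ : Fin N → ℝ) (hξ : ∀ k, 0 < ξ k ∧ ξ k ≤ 1)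
    (n : Fin N) (o : Fin N → ℝ) (ho : ∀ k, k ≠ n → o k < o n) :
    ξ n / (∑ k, ξ k) < ξ n * Real.exp (o n) / (∑ k, ξ k * Real.exp (o k)) := by
  have hpos : ∀ k : Fin N, 0 < ξ k := fun k => (hξ k).1
  have hs1 : 0 < ∑ k, ξ k :=
    Finset.sum_pos (fun k _ => hpos k) ⟨n, Finset.mem_univ n⟩
  have hs2 : 0 < ∑ k, ξ k * Real.exp (o k) :=
    Finset.sum_pos (fun k _ => mul_pos (hpos k) (Real.exp_pos _)) ⟨n, Finset.mem_univ n⟩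
  rw [div_lt_div_iff₀ hs1 hs2]
  have : Nontrivial (Fin N) := Fin.nontrivial_iff_two_le.mpr hN
  obtain ⟨m, hmn⟩ := exists_ne n
  calc ξ n * (∑ k, ξ k * Real.exp (o k)) = ∑ k, ξ n * (ξ k * Real.exp (o k)) := by
        rw [Finset.mul_sum]
    _ < ∑ k, ξ k * (ξ n * Real.exp (o n)) := by
        apply Finset.sum_lt_sum
        · intro k _
          have : Real.exp (o k) ≤ Real.exp (o n) := by
            rcases eq_or_ne k n with rfl | h
            · exact le_refl _
            · exact (Real.exp_lt_exp.mpr (ho k h)).le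
          nlinarith [mul_pos (hpos n) (hpos k)]
        · refine ⟨m, Finset.mem_univ m, ?_⟩
          have : Real.exp (o m) < Real.exp (o n) := Real.exp_lt_exp.mpr (ho m hmn)
          nlinarith [mul_pos (hpos n) (hpos m)]
    _ = ξ n * Real.exp (o n) * ∑ k, ξ k := by
        rw [Finset.mul_sum]
        apply Finset.sum_congr rfl
        intro k _; ring
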